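/- The number of real conjugacy classes of SL_2(q) for q odd is q + 4 if q ≡ 1 (mod 4) and q if q ≡ 3 (mod 4); moreover SL_2(q) (q odd) has exactly 2 strongly real classes, namely the classes of I and -I. -/

import Mathlib

/-- The element `-I` of `SL₂(F)`. -/
def negOne (F : Type*) [Field F] : Matrix.SpecialLinearGroup (Fin 2) F :=
  ⟨-1, by simp [Matrix.det_neg]⟩

open Matrix Polynomial ConjClasses

set_option linter.unusedSectionVars false
set_option linter.unusedVariables false

section Aux

variable {F : Type*} [Field F] [Fintype F]

/-- companion-type matrix of trace `t` in `SL₂`. -/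
def Cm (t : F) : Matrix.SpecialLinearGroup (Fin 2) F :=
  ⟨!![0,-1;1,t], by simp [Matrix.det_fin_two_of]⟩

theorem isConj_inv' {G : Type*} [Group G] {g h : G} (hc : IsConj g h) : IsConj g⁻¹ h⁻¹ := by
  obtain ⟨c, hc⟩ := isConj_iff.mp hc
  exact isConj_iff.mpr ⟨c, by rw [← hc]; group⟩

theorem two_ne_zero'' (hq : Fintype.card F % 2 = 1) : (2 : F) ≠ 0 := by
  have : ringChar F ≠ 2 := by
    intro h
    have := FiniteField.even_card_of_char_two h
    omega
  exact Ring.two_ne_zero this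

/-- a nondegenerate binary quadratic form over a finite field of odd char represents 1 -/
theorem quad_rep_one (hq : Fintype.card F % 2 = 1) (c e b : F) (hd : e^2 - 4*(c*b) ≠ 0) :
    ∃ x y : F, c*x^2 + e*(x*y) + b*y^2 = 1 := by
  have h2 : (2 : F) ≠ 0 := two_ne_zero'' hq
  have h4 : (4 : F) ≠ 0 := by
    have : (4:F) = 2*2 := by norm_num
    rw [this]; exact mul_ne_zero h2 h2
  by_cases hc : c = 0
  · subst hc
    have he : e ≠ 0 := by intro h; subst h; simp at hd
    exact ⟨(1-b)/e, 1, by field_simp; ring⟩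
  · set f' : F := b - e^2/(4*c) with hf'
    have hf0 : f' ≠ 0 := by
      intro h
      rw [hf', sub_eq_zero] at h
      apply hd
      rw [h]
      field_simp
      ring
    have hdegg : degree (C f' * X^2 - 1 : F[X]) = 2 := by
      rw [degree_sub_eq_left_of_degree_lt, degree_mul, degree_C hf0, degree_X_pow]
      · rfl
      · rw [degree_mul, degree_C hf0, degree_X_pow, degree_one]
        decide
    obtain ⟨x0, y0, hxy⟩ := FiniteField.exists_root_sum_quadratic
      (f := C c * X^2) (g := C f' * X^2 - 1)
      (by rw [degree_mul, degree_C hc, degree_X_pow]; rfl) hdegg hq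
    simp only [eval_add, eval_mul, eval_pow, eval_C, eval_X, eval_sub, eval_one] at hxy
    refine ⟨x0 - e*y0/(2*c), y0, ?_⟩
    rw [hf'] at hxy
    field_simp at hxy ⊢
    linear_combination hxy

theorem conj_companion (hq : Fintype.card F % 2 = 1) (g : Matrix.SpecialLinearGroup (Fin 2) F)
    (h2 : Matrix.trace (g : Matrix (Fin 2) (Fin 2) F) ≠ 2)
    (h2' : Matrix.trace (g : Matrix (Fin 2) (Fin 2) F) ≠ -2) :
    IsConj (Cm (Matrix.trace (g : Matrix (Fin 2) (Fin 2) F))) g := by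
  set a := g.1 0 0; set b := g.1 0 1; set c := g.1 1 0; set d := g.1 1 1
  have hg : (↑g : Matrix (Fin 2) (Fin 2) F) = !![a,b;c,d] := (Matrix.etaExpand_eq _).symm
  have hdet : a*d - b*c = 1 := by
    have h := g.2; rw [Matrix.det_fin_two] at h; exact h
  have htr : Matrix.trace (g : Matrix (Fin 2) (Fin 2) F) = a + d := Matrix.trace_fin_two _
  rw [htr] at h2 h2' ⊢
  clear_value a b c d
  have hd4 : (d-a)^2 - 4*(c*(-b)) ≠ 0 := by
    intro h
    have h' : (a+d-2)*(a+d+2) = 0 := by linear_combination h + 4*hdet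
    rcases mul_eq_zero.mp h' with h'' | h''
    · exact h2 (by linear_combination h'')
    · exact h2' (by linear_combination h'')
  obtain ⟨x, y, hform⟩ := quad_rep_one hq c (d-a) (-b) hd4
  set P : Matrix.SpecialLinearGroup (Fin 2) F :=
    ⟨!![x, a*x+b*y; y, c*x+d*y], by rw [Matrix.det_fin_two_of]; linear_combination hform⟩ with hP
  rw [isConj_iff]
  refine ⟨P, ?_⟩
  rw [mul_inv_eq_iff_eq_mul]
  apply Subtype.ext
  rw [Matrix.SpecialLinearGroup.coe_mul, Matrix.SpecialLinearGroup.coe_mul, hg]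
  show !![x, a*x+b*y; y, c*x+d*y] * !![0,-1;1,(a+d)] = !![a,b;c,d] * !![x, a*x+b*y; y, c*x+d*y]
  ext i j
  fin_cases i <;> fin_cases j <;>
    simp [Matrix.mul_apply, Fin.sum_univ_two] <;>
    first
    | ring1
    | linear_combination x*hdet
    | linear_combination y*hdet

def Um (a : F) : Matrix.SpecialLinearGroup (Fin 2) F :=
  ⟨!![1,a;0,1], by simp [Matrix.det_fin_two_of]⟩

theorem conj_unip (hq : Fintype.card F % 2 = 1) (g : Matrix.SpecialLinearGroup (Fin 2) F)
    (htr : Matrix.trace (g : Matrix (Fin 2) (Fin 2) F) = 2) (hne : g ≠ 1) :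
    ∃ m : F, m ≠ 0 ∧ IsConj (Um m) g := by
  set a := g.1 0 0 with ha; set b := g.1 0 1 with hb; set c := g.1 1 0 with hc
  set d := g.1 1 1 with hd
  have hg : (↑g : Matrix (Fin 2) (Fin 2) F) = !![a,b;c,d] := (Matrix.etaExpand_eq _).symm
  have hdet : a*d - b*c = 1 := by
    have h := g.2; rw [Matrix.det_fin_two] at h; exact h
  have htr' : a + d = 2 := by rw [Matrix.trace_fin_two] at htr; exact htr
  clear_value a b c d
  have key : ∀ x y : F, (-c*x^2 + (a-d)*(x*y) + b*y^2) ≠ 0 →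
      ∃ m : F, m ≠ 0 ∧ IsConj (Um m) g := by
    intro x y hδ0
    refine ⟨-c*x^2 + (a-d)*(x*y) + b*y^2, hδ0, ?_⟩
    set δ := -c*x^2 + (a-d)*(x*y) + b*y^2 with hδ
    refine isConj_iff.mpr ⟨⟨!![δ⁻¹*((a-1)*x + b*y), x; δ⁻¹*(c*x + (d-1)*y), y], ?_⟩, ?_⟩
    · rw [Matrix.det_fin_two_of]
      field_simp
      rw [hδ]; ring
    · refine mul_inv_eq_iff_eq_mul.mpr ?_
      apply Subtype.ext
      change _ = (g : Matrix (Fin 2) (Fin 2) F) * _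
      rw [hg]
      show (!![δ⁻¹*((a-1)*x + b*y), x; δ⁻¹*(c*x + (d-1)*y), y] : Matrix (Fin 2) (Fin 2) F) * !![1,δ;0,1]
          = !![a,b;c,d] * !![δ⁻¹*((a-1)*x + b*y), x; δ⁻¹*(c*x + (d-1)*y), y]
      ext i j
      fin_cases i <;> fin_cases j
      · simp only [Matrix.mul_apply, Fin.sum_univ_two, Fin.zero_eta, Fin.mk_one, Matrix.of_apply, Matrix.cons_val', Matrix.cons_val_zero, Matrix.cons_val_one, Matrix.head_cons, Matrix.cons_val_fin_one, Matrix.head_fin_const]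
        field_simp
        linear_combination (-(x*a) - y*b)*htr' + x*hdet
      · simp only [Matrix.mul_apply, Fin.sum_univ_two, Fin.zero_eta, Fin.mk_one, Matrix.of_apply, Matrix.cons_val', Matrix.cons_val_zero, Matrix.cons_val_one, Matrix.head_cons, Matrix.cons_val_fin_one, Matrix.head_fin_const]
        field_simp
        try ring1
        try linear_combination x*htr'
      · simp only [Matrix.mul_apply, Fin.sum_univ_two, Fin.zero_eta, Fin.mk_one, Matrix.of_apply, Matrix.cons_val', Matrix.cons_val_zero, Matrix.cons_val_one, Matrix.head_cons, Matrix.cons_val_fin_one, Matrix.head_fin_const]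
        field_simp
        linear_combination (-(c*x) - d*y)*htr' + y*hdet
      · simp only [Matrix.mul_apply, Fin.sum_univ_two, Fin.zero_eta, Fin.mk_one, Matrix.of_apply, Matrix.cons_val', Matrix.cons_val_zero, Matrix.cons_val_one, Matrix.head_cons, Matrix.cons_val_fin_one, Matrix.head_fin_const]
        field_simp
        try ring1
        try linear_combination y*htr'
  by_cases hc0 : c ≠ 0
  · exact key 1 0 (by simpa using neg_ne_zero.mpr hc0)
  by_cases hb0 : b ≠ 0
  · exact key 0 1 (by simpa using hb0)
  push_neg at hc0 hb0
  exfalso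
  apply hne
  have ha1 : (a-1)^2 = 0 := by
    subst hb0; subst hc0
    linear_combination a*htr' - hdet
  have ha1' : a = 1 := by
    have h0 := pow_eq_zero_iff (n := 2) (by norm_num) |>.mp ha1
    linear_combination h0
  have hd1 : d = 1 := by linear_combination htr' - ha1'
  apply Subtype.ext
  rw [hg, ha1', hd1, hb0, hc0]
  exact Matrix.one_fin_two.symm

theorem negOne_mul_comm (g : Matrix.SpecialLinearGroup (Fin 2) F) :
    negOne F * g = g * negOne F := by
  apply Subtype.ext
  rw [Matrix.SpecialLinearGroup.coe_mul, Matrix.SpecialLinearGroup.coe_mul]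
  show (-1 : Matrix (Fin 2) (Fin 2) F) * g = g * (-1)
  simp

theorem negOne_mul_negOne : (negOne F) * (negOne F) = 1 := by
  apply Subtype.ext
  rw [Matrix.SpecialLinearGroup.coe_mul]
  show (-1 : Matrix (Fin 2) (Fin 2) F) * (-1) = _
  simp

theorem negOne_inv : (negOne F)⁻¹ = negOne F :=
  inv_eq_of_mul_eq_one_right negOne_mul_negOne

theorem isConj_negOne_mul {g h : Matrix.SpecialLinearGroup (Fin 2) F} (hc : IsConj g h) :
    IsConj (negOne F * g) (negOne F * h) := by
  obtain ⟨c, hc⟩ := isConj_iff.mp hc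
  refine isConj_iff.mpr ⟨c, ?_⟩
  rw [← hc]
  simp only [← mul_assoc]
  rw [← negOne_mul_comm c]

theorem isConj_negOne_mul_iff {g h : Matrix.SpecialLinearGroup (Fin 2) F} :
    IsConj (negOne F * g) (negOne F * h) ↔ IsConj g h := by
  constructor
  · intro hc
    have := isConj_negOne_mul hc
    rwa [← mul_assoc, ← mul_assoc, negOne_mul_negOne, one_mul, one_mul] at this
  · exact isConj_negOne_mul

theorem isConj_negOne {g : Matrix.SpecialLinearGroup (Fin 2) F}
    (h : IsConj (negOne F) g) : g = negOne F := by
  obtain ⟨c, hc⟩ := isConj_iff.mp h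
  rw [← hc, ← negOne_mul_comm, mul_assoc, mul_inv_cancel, mul_one]

theorem um_inv (a : F) : (Um a)⁻¹ = Um (-a) := by
  apply inv_eq_of_mul_eq_one_right
  apply Subtype.ext
  rw [Matrix.SpecialLinearGroup.coe_mul]
  show (!![1,a;0,1] : Matrix (Fin 2) (Fin 2) F) * !![1,-a;0,1] = 1
  rw [Matrix.mul_fin_two, Matrix.one_fin_two]
  norm_num

theorem um_ne_one {a : F} (ha : a ≠ 0) : Um a ≠ 1 := by
  intro h
  apply ha
  have := congrFun (congrFun (congrArg Subtype.val h) 0) 1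
  simpa [Um, Matrix.one_apply] using this

theorem trace_um (a : F) : Matrix.trace ((Um a : Matrix.SpecialLinearGroup (Fin 2) F) : Matrix (Fin 2) (Fin 2) F) = 2 := by
  show Matrix.trace !![1,a;0,1] = 2
  rw [Matrix.trace_fin_two_of]; norm_num

theorem trace_negOne_mul (g : Matrix.SpecialLinearGroup (Fin 2) F) :
    Matrix.trace ((negOne F * g : Matrix.SpecialLinearGroup (Fin 2) F) : Matrix (Fin 2) (Fin 2) F)
      = -Matrix.trace (g : Matrix (Fin 2) (Fin 2) F) := by
  rw [Matrix.SpecialLinearGroup.coe_mul]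
  show Matrix.trace ((-1 : Matrix (Fin 2) (Fin 2) F) * (g : Matrix (Fin 2) (Fin 2) F)) = _
  rw [neg_one_mul, Matrix.trace_neg]

theorem trace_isConj {g h : Matrix.SpecialLinearGroup (Fin 2) F} (hc : IsConj g h) :
    Matrix.trace (g : Matrix (Fin 2) (Fin 2) F) = Matrix.trace (h : Matrix (Fin 2) (Fin 2) F) := by
  obtain ⟨c, hc⟩ := isConj_iff.mp hc
  subst hc
  rw [Matrix.SpecialLinearGroup.coe_mul, Matrix.SpecialLinearGroup.coe_mul, trace_mul_comm,
    ← Matrix.SpecialLinearGroup.coe_mul, ← Matrix.SpecialLinearGroup.coe_mul]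
  congr 1
  group

theorem um_conj_iff {a b : F} (ha : a ≠ 0) :
    IsConj (Um a) (Um b) ↔ ∃ s : F, s ≠ 0 ∧ b = s^2 * a := by
  constructor
  · intro h
    obtain ⟨P, hP⟩ := isConj_iff.mp h
    rw [mul_inv_eq_iff_eq_mul] at hP
    have hP' : (P : Matrix (Fin 2) (Fin 2) F) * !![1,a;0,1] = !![1,b;0,1] * P := by
      have := congrArg Subtype.val hP
      rw [Matrix.SpecialLinearGroup.coe_mul, Matrix.SpecialLinearGroup.coe_mul] at this
      exact this
    set p := P.1 0 0 with hp; set q := P.1 0 1 with hq0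
    set r := P.1 1 0 with hr; set s := P.1 1 1 with hs
    have hgP : (↑P : Matrix (Fin 2) (Fin 2) F) = !![p,q;r,s] := (Matrix.etaExpand_eq _).symm
    have hdet : p*s - q*r = 1 := by
      have hd := P.2; rw [Matrix.det_fin_two] at hd; exact hd
    rw [hgP] at hP'
    rw [Matrix.mul_fin_two, Matrix.mul_fin_two] at hP'
    have e01 := congrFun (congrFun hP' 0) 1
    simp only [Matrix.cons_val', Matrix.cons_val_zero, Matrix.cons_val_one, Matrix.head_cons,
      Matrix.head_fin_const, Matrix.cons_val_fin_one, Matrix.of_apply] at e01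
    have e11 : r*a + s = s := by
      have := congrFun (congrFun hP' 1) 1
      simpa [mul_comm] using this
    have hr0 : r = 0 := by
      have : r * a = 0 := by linear_combination e11
      rcases mul_eq_zero.mp this with h1 | h1
      · exact h1
      · exact absurd h1 ha
    have hps : p * s = 1 := by rw [hr0] at hdet; linear_combination hdet
    have hp0 : p ≠ 0 := left_ne_zero_of_mul_eq_one hps
    refine ⟨p, hp0, ?_⟩
    linear_combination -b*hps - p*e01
  · rintro ⟨s, hs0, rfl⟩
    refine isConj_iff.mpr ⟨⟨!![s,0;0,s⁻¹], by rw [Matrix.det_fin_two_of]; simp [hs0]⟩, ?_⟩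
    refine mul_inv_eq_iff_eq_mul.mpr ?_
    apply Subtype.ext
    show (!![s,0;0,s⁻¹] : Matrix (Fin 2) (Fin 2) F) * !![1,a;0,1] = !![1,s^2*a;0,1] * !![s,0;0,s⁻¹]
    rw [Matrix.mul_fin_two, Matrix.mul_fin_two,
      show s^2*a*s⁻¹ = s*a from by field_simp]
    norm_num

theorem sq_one_classify (hq : Fintype.card F % 2 = 1)
    (h : Matrix.SpecialLinearGroup (Fin 2) F) (hh : h * h = 1) :
    h = 1 ∨ h = negOne F := by
  have h2 : (2:F) ≠ 0 := two_ne_zero'' hq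
  set a := h.1 0 0 with ha; set b := h.1 0 1 with hb
  set c := h.1 1 0 with hc; set d := h.1 1 1 with hd
  have hg : (↑h : Matrix (Fin 2) (Fin 2) F) = !![a,b;c,d] := (Matrix.etaExpand_eq _).symm
  have hdet : a*d - b*c = 1 := by
    have h' := h.2; rw [Matrix.det_fin_two] at h'; exact h'
  have hh' : (!![a,b;c,d] : Matrix (Fin 2) (Fin 2) F) * !![a,b;c,d] = 1 := by
    rw [← hg, ← Matrix.SpecialLinearGroup.coe_mul, hh, Matrix.SpecialLinearGroup.coe_one]
  rw [Matrix.mul_fin_two, Matrix.one_fin_two] at hh'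
  have e00 := congrFun (congrFun hh' 0) 0
  have e01 := congrFun (congrFun hh' 0) 1
  have e10 := congrFun (congrFun hh' 1) 0
  have e11 := congrFun (congrFun hh' 1) 1
  simp only [Matrix.cons_val', Matrix.cons_val_zero, Matrix.cons_val_one, Matrix.head_cons,
    Matrix.head_fin_const, Matrix.cons_val_fin_one, Matrix.of_apply] at e00 e01 e10 e11
  clear_value a b c d
  have had : a + d ≠ 0 := by
    intro h0
    apply h2
    linear_combination -e00 - hdet + a*h0
  have hb0 : b = 0 := by
    have : b * (a + d) = 0 := by linear_combination e01
    rcases mul_eq_zero.mp this with h1 | h1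
    · exact h1
    · exact absurd h1 had
  have hc0 : c = 0 := by
    have : c * (a + d) = 0 := by linear_combination e10
    rcases mul_eq_zero.mp this with h1 | h1
    · exact h1
    · exact absurd h1 had
  have ha2 : a * a = 1 := by linear_combination e00 - c*hb0
  have hda : d = a := by
    -- ad = 1 and a² = 1 → d = a
    have h1 : a * d = 1 := by linear_combination hdet + c*hb0
    have ha0 : a ≠ 0 := left_ne_zero_of_mul_eq_one ha2
    exact mul_left_cancel₀ ha0 (by rw [h1, ha2])
  rcases mul_self_eq_one_iff.mp ha2 with h1 | h1
  · left
    apply Subtype.ext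
    rw [hg, hb0, hc0, hda, h1, Matrix.SpecialLinearGroup.coe_one, Matrix.one_fin_two]
  · right
    apply Subtype.ext
    rw [hg, hb0, hc0, hda, h1]
    show _ = (-1 : Matrix (Fin 2) (Fin 2) F)
    rw [show (-1 : Matrix (Fin 2) (Fin 2) F) = -(!![1,0;0,1]) from by rw [← Matrix.one_fin_two]]
    norm_num

theorem nonsquare_factor (hq : Fintype.card F % 2 = 1) {m e : F}
    (hm : ¬IsSquare m) (he : ¬IsSquare e) : ∃ s : F, s ≠ 0 ∧ m = s^2 * e := by
  letI := Classical.decEq F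
  have hchar : ringChar F ≠ 2 := by
    intro h; have := FiniteField.even_card_of_char_two h; omega
  have hm0 : m ≠ 0 := by rintro rfl; exact hm ⟨0, by ring⟩
  have he0 : e ≠ 0 := by rintro rfl; exact he ⟨0, by ring⟩
  have h1 : quadraticChar F m = -1 := (quadraticChar_neg_one_iff_not_isSquare (F := F)).mpr hm
  have h2 : quadraticChar F e = -1 := (quadraticChar_neg_one_iff_not_isSquare (F := F)).mpr he
  have h3 : quadraticChar F (m * e⁻¹) = 1 := by
    have hprod : quadraticChar F e * quadraticChar F e⁻¹ = 1 := by
      rw [← _root_.map_mul, mul_inv_cancel₀ he0, _root_.map_one]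
    have h2' : quadraticChar F e⁻¹ = -1 := by rw [h2] at hprod; linarith
    rw [_root_.map_mul, h1, h2']; norm_num
  have h4 : IsSquare (m * e⁻¹) :=
    (quadraticChar_one_iff_isSquare (mul_ne_zero hm0 (inv_ne_zero he0))).mp h3
  obtain ⟨s, hs⟩ := h4
  have hs0 : s ≠ 0 := by
    intro h0; rw [h0, mul_zero] at hs
    exact (mul_ne_zero hm0 (inv_ne_zero he0)) hs
  refine ⟨s, hs0, ?_⟩
  have : m = s * s * e := by
    field_simp at hs
    linear_combination hs
  rw [this]; ring

end Aux

section Aux2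

variable {F : Type*} [Field F] [Fintype F]

theorem trace_cm (t : F) :
    Matrix.trace ((Cm t : Matrix.SpecialLinearGroup (Fin 2) F) : Matrix (Fin 2) (Fin 2) F) = t := by
  show Matrix.trace !![0,-1;1,t] = t
  rw [Matrix.trace_fin_two_of]; ring

theorem cm_inv_coe (t : F) :
    (((Cm t)⁻¹ : Matrix.SpecialLinearGroup (Fin 2) F) : Matrix (Fin 2) (Fin 2) F)
      = !![t,1;-1,0] := by
  rw [Matrix.SpecialLinearGroup.coe_inv]
  show Matrix.adjugate !![0,-1;1,t] = _
  rw [Matrix.adjugate_fin_two_of]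
  norm_num

theorem real_cm (hq : Fintype.card F % 2 = 1) {t : F} (ht2 : t ≠ 2) (htm2 : t ≠ -2) :
    IsConj (Cm t) ((Cm t)⁻¹ : Matrix.SpecialLinearGroup (Fin 2) F) := by
  have htr : Matrix.trace (((Cm t)⁻¹ : Matrix.SpecialLinearGroup (Fin 2) F) :
      Matrix (Fin 2) (Fin 2) F) = t := by
    rw [cm_inv_coe, Matrix.trace_fin_two_of]; ring
  have h := conj_companion hq ((Cm t)⁻¹) (by rw [htr]; exact ht2) (by rw [htr]; exact htm2)
  rwa [htr] at h

theorem trace_one' :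
    Matrix.trace ((1 : Matrix.SpecialLinearGroup (Fin 2) F) : Matrix (Fin 2) (Fin 2) F) = 2 := by
  rw [Matrix.SpecialLinearGroup.coe_one, Matrix.one_fin_two, Matrix.trace_fin_two_of]
  norm_num

theorem trace_negOne :
    Matrix.trace ((negOne F : Matrix.SpecialLinearGroup (Fin 2) F) : Matrix (Fin 2) (Fin 2) F)
      = -2 := by
  show Matrix.trace (-1 : Matrix (Fin 2) (Fin 2) F) = -2
  rw [show (-1 : Matrix (Fin 2) (Fin 2) F) = -(1) from rfl, Matrix.trace_neg]
  rw [Matrix.one_fin_two, Matrix.trace_fin_two_of]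
  norm_num

theorem mk_ne_of_trace {g h : Matrix.SpecialLinearGroup (Fin 2) F}
    (hne : Matrix.trace (g : Matrix (Fin 2) (Fin 2) F)
      ≠ Matrix.trace (h : Matrix (Fin 2) (Fin 2) F)) :
    ConjClasses.mk g ≠ ConjClasses.mk h := fun h' =>
  hne (trace_isConj (ConjClasses.mk_eq_mk_iff_isConj.mp h'))

theorem negOne_negOne_cancel (g : Matrix.SpecialLinearGroup (Fin 2) F) :
    negOne F * (negOne F * g) = g := by
  rw [← mul_assoc, negOne_mul_negOne, one_mul]

theorem negOne_mul_inv (g : Matrix.SpecialLinearGroup (Fin 2) F) :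
    (negOne F * g)⁻¹ = negOne F * g⁻¹ := by
  rw [_root_.mul_inv_rev, negOne_inv, ← negOne_mul_comm]

/-- classification of real trace-2 elements -/
theorem trace2_classify (hq : Fintype.card F % 2 = 1) (g : Matrix.SpecialLinearGroup (Fin 2) F)
    (htr : Matrix.trace (g : Matrix (Fin 2) (Fin 2) F) = 2) (hreal : IsConj g g⁻¹) :
    g = 1 ∨ (IsSquare (-1 : F) ∧ ∃ m : F, m ≠ 0 ∧ IsConj (Um m) g) := by
  by_cases hg1 : g = 1
  · exact Or.inl hg1
  · right
    obtain ⟨m, hm0, hconj⟩ := conj_unip hq g htr hg1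
    have hreal' : IsConj (Um m) ((Um m)⁻¹) :=
      (hconj.trans hreal).trans (isConj_inv' hconj.symm)
    rw [um_inv] at hreal'
    obtain ⟨s, hs0, hsm⟩ := (um_conj_iff hm0).mp hreal'
    have hsq : -1 = s^2 := by
      have := mul_right_cancel₀ hm0 (show (-1) * m = s^2 * m by linear_combination hsm)
      exact this
    exact ⟨⟨s, by rw [← pow_two]; exact hsq⟩, m, hm0, hconj⟩

/-- every noncentral unipotent class is the class of `Um 1` or `Um ε` -/
theorem um_class_eq (hq : Fintype.card F % 2 = 1) {ε : F} (hε : ¬IsSquare ε)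
    {m : F} (hm0 : m ≠ 0) :
    IsConj (Um 1) (Um m) ∨ IsConj (Um ε) (Um m) := by
  by_cases hsq : IsSquare m
  · obtain ⟨s, hs⟩ := hsq
    have hs0 : s ≠ 0 := by rintro rfl; rw [mul_zero] at hs; exact hm0 hs
    exact Or.inl ((um_conj_iff one_ne_zero).mpr ⟨s, hs0, by rw [hs]; ring⟩)
  · obtain ⟨s, hs0, hms⟩ := nonsquare_factor hq hsq hε
    have hε0 : ε ≠ 0 := by rintro rfl; exact hε ⟨0, by ring⟩
    exact Or.inr ((um_conj_iff hε0).mpr ⟨s, hs0, hms⟩)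

end Aux2

section SetDescr

variable {F : Type*} [Field F] [Fintype F]

theorem real_um (hq : Fintype.card F % 2 = 1) (hsq : IsSquare (-1 : F)) {a : F} (ha : a ≠ 0) :
    IsConj (Um a) ((Um a)⁻¹ : Matrix.SpecialLinearGroup (Fin 2) F) := by
  rw [um_inv]
  obtain ⟨s, hs⟩ := hsq
  have hs0 : s ≠ 0 := by
    rintro rfl; rw [mul_zero] at hs
    exact absurd (by linear_combination -hs : (1:F) = 0) one_ne_zero
  exact (um_conj_iff ha).mpr ⟨s, hs0, by linear_combination a*hs⟩

theorem S_eq_three (hq : Fintype.card F % 2 = 1) (hq4 : Fintype.card F % 4 = 3) :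
    {c : ConjClasses (Matrix.SpecialLinearGroup (Fin 2) F) |
        ∃ g, ConjClasses.mk g = c ∧ IsConj g g⁻¹}
      = insert (ConjClasses.mk 1) (insert (ConjClasses.mk (negOne F))
          ((fun t : F => ConjClasses.mk (Cm t)) '' {t : F | t ≠ 2 ∧ t ≠ -2})) := by
  have hns : ¬IsSquare (-1 : F) := by
    rw [FiniteField.isSquare_neg_one_iff]; omega
  ext c
  simp only [Set.mem_setOf_eq, Set.mem_insert_iff, Set.mem_image]
  constructor
  · rintro ⟨g, rfl, hreal⟩
    by_cases ht2 : Matrix.trace (g : Matrix (Fin 2) (Fin 2) F) = 2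
    · rcases trace2_classify hq g ht2 hreal with rfl | ⟨hsq, -⟩
      · exact Or.inl rfl
      · exact absurd hsq hns
    · by_cases htm2 : Matrix.trace (g : Matrix (Fin 2) (Fin 2) F) = -2
      · have htr' : Matrix.trace ((negOne F * g : Matrix.SpecialLinearGroup (Fin 2) F) :
            Matrix (Fin 2) (Fin 2) F) = 2 := by
          rw [trace_negOne_mul, htm2]; ring
        have hreal' : IsConj (negOne F * g) ((negOne F * g)⁻¹) := by
          rw [negOne_mul_inv]; exact isConj_negOne_mul hreal
        rcases trace2_classify hq (negOne F * g) htr' hreal' with h1 | ⟨hsq, -⟩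
        · have hg : g = negOne F := by
            have := congrArg (fun x => negOne F * x) h1
            simpa [negOne_negOne_cancel, mul_one] using this
          exact Or.inr (Or.inl (by rw [hg]))
        · exact absurd hsq hns
      · exact Or.inr (Or.inr ⟨Matrix.trace (g : Matrix (Fin 2) (Fin 2) F), ⟨ht2, htm2⟩,
          ConjClasses.mk_eq_mk_iff_isConj.mpr (conj_companion hq g ht2 htm2)⟩)
  · rintro (rfl | rfl | ⟨t, ⟨ht2, htm2⟩, rfl⟩)
    · exact ⟨1, rfl, by rw [inv_one]⟩
    · exact ⟨negOne F, rfl, by rw [negOne_inv]⟩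
    · exact ⟨Cm t, rfl, real_cm hq ht2 htm2⟩

theorem S_eq_one (hq : Fintype.card F % 2 = 1) (hq4 : Fintype.card F % 4 = 1)
    {ε : F} (hε : ¬IsSquare ε) :
    {c : ConjClasses (Matrix.SpecialLinearGroup (Fin 2) F) |
        ∃ g, ConjClasses.mk g = c ∧ IsConj g g⁻¹}
      = insert (ConjClasses.mk 1) (insert (ConjClasses.mk (negOne F))
          (insert (ConjClasses.mk (Um 1)) (insert (ConjClasses.mk (Um ε))
          (insert (ConjClasses.mk (negOne F * Um 1)) (insert (ConjClasses.mk (negOne F * Um ε))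
          ((fun t : F => ConjClasses.mk (Cm t)) '' {t : F | t ≠ 2 ∧ t ≠ -2})))))) := by
  have hsq : IsSquare (-1 : F) := by
    rw [FiniteField.isSquare_neg_one_iff]; omega
  ext c
  simp only [Set.mem_setOf_eq, Set.mem_insert_iff, Set.mem_image]
  constructor
  · rintro ⟨g, rfl, hreal⟩
    by_cases ht2 : Matrix.trace (g : Matrix (Fin 2) (Fin 2) F) = 2
    · rcases trace2_classify hq g ht2 hreal with rfl | ⟨-, m, hm0, hconj⟩
      · exact Or.inl rfl
      · rcases um_class_eq hq hε hm0 with h1 | h1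
        · exact Or.inr (Or.inr (Or.inl
            (ConjClasses.mk_eq_mk_iff_isConj.mpr (h1.trans hconj)).symm))
        · exact Or.inr (Or.inr (Or.inr (Or.inl
            (ConjClasses.mk_eq_mk_iff_isConj.mpr (h1.trans hconj)).symm)))
    · by_cases htm2 : Matrix.trace (g : Matrix (Fin 2) (Fin 2) F) = -2
      · have htr' : Matrix.trace ((negOne F * g : Matrix.SpecialLinearGroup (Fin 2) F) :
            Matrix (Fin 2) (Fin 2) F) = 2 := by
          rw [trace_negOne_mul, htm2]; ring
        have hreal' : IsConj (negOne F * g) ((negOne F * g)⁻¹) := by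
          rw [negOne_mul_inv]; exact isConj_negOne_mul hreal
        rcases trace2_classify hq (negOne F * g) htr' hreal' with h1 | ⟨-, m, hm0, hconj⟩
        · have hg : g = negOne F := by
            have := congrArg (fun x => negOne F * x) h1
            simpa [negOne_negOne_cancel, mul_one] using this
          exact Or.inr (Or.inl (by rw [hg]))
        · have hconj' : IsConj (negOne F * Um m) g := by
            have := isConj_negOne_mul hconj
            rwa [negOne_negOne_cancel] at this
          rcases um_class_eq hq hε hm0 with h1 | h1
          · exact Or.inr (Or.inr (Or.inr (Or.inr (Or.inl
              (ConjClasses.mk_eq_mk_iff_isConj.mpr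
                ((isConj_negOne_mul h1).trans hconj')).symm))))
          · exact Or.inr (Or.inr (Or.inr (Or.inr (Or.inr (Or.inl
              (ConjClasses.mk_eq_mk_iff_isConj.mpr
                ((isConj_negOne_mul h1).trans hconj')).symm)))))
      · exact Or.inr (Or.inr (Or.inr (Or.inr (Or.inr (Or.inr
          ⟨Matrix.trace (g : Matrix (Fin 2) (Fin 2) F), ⟨ht2, htm2⟩,
            ConjClasses.mk_eq_mk_iff_isConj.mpr (conj_companion hq g ht2 htm2)⟩)))))
  · have hε0 : ε ≠ 0 := by rintro rfl; exact hε ⟨0, by ring⟩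
    rintro (rfl | rfl | rfl | rfl | rfl | rfl | ⟨t, ⟨ht2, htm2⟩, rfl⟩)
    · exact ⟨1, rfl, by rw [inv_one]⟩
    · exact ⟨negOne F, rfl, by rw [negOne_inv]⟩
    · exact ⟨Um 1, rfl, real_um hq hsq one_ne_zero⟩
    · exact ⟨Um ε, rfl, real_um hq hsq hε0⟩
    · exact ⟨negOne F * Um 1, rfl, by
        rw [negOne_mul_inv]; exact isConj_negOne_mul (real_um hq hsq one_ne_zero)⟩
    · exact ⟨negOne F * Um ε, rfl, by
        rw [negOne_mul_inv]; exact isConj_negOne_mul (real_um hq hsq hε0)⟩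
    · exact ⟨Cm t, rfl, real_cm hq ht2 htm2⟩

end SetDescr

section Count

variable {F : Type*} [Field F] [Fintype F]

theorem two_ne_negTwo (hq : Fintype.card F % 2 = 1) : (2:F) ≠ -2 := by
  intro h
  apply two_ne_zero'' hq
  have h4 : (2:F)*2 = 0 := by linear_combination h
  exact mul_self_eq_zero.mp h4

theorem T_ncard (hq : Fintype.card F % 2 = 1) :
    ({t : F | t ≠ 2 ∧ t ≠ -2}).ncard = Fintype.card F - 2 := by
  have hT : {t : F | t ≠ 2 ∧ t ≠ -2} = ({2,-2} : Set F)ᶜ := by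
    ext t
    simp [Set.mem_compl_iff, not_or]
  rw [hT]
  have h := Set.ncard_add_ncard_compl ({2,-2} : Set F)
  rw [Set.ncard_pair (two_ne_negTwo hq), Nat.card_eq_fintype_card] at h
  omega

theorem cm_injOn : Set.InjOn (fun t : F => ConjClasses.mk (Cm t)) {t : F | t ≠ 2 ∧ t ≠ -2} := by
  intro t1 _ t2 _ h
  have := trace_isConj (ConjClasses.mk_eq_mk_iff_isConj.mp h)
  rwa [trace_cm, trace_cm] at this

theorem mk_not_mem_image {g : Matrix.SpecialLinearGroup (Fin 2) F}
    (h : Matrix.trace (g : Matrix (Fin 2) (Fin 2) F) = 2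
      ∨ Matrix.trace (g : Matrix (Fin 2) (Fin 2) F) = -2) (hq : Fintype.card F % 2 = 1) :
    ConjClasses.mk g ∉ (fun t : F => ConjClasses.mk (Cm t)) '' {t : F | t ≠ 2 ∧ t ≠ -2} := by
  rintro ⟨t, ⟨ht2, htm2⟩, hEq⟩
  have htr := trace_isConj (ConjClasses.mk_eq_mk_iff_isConj.mp hEq)
  rw [trace_cm] at htr
  rcases h with h | h
  · exact ht2 (htr.trans h)
  · exact htm2 (htr.trans h)

theorem trace_negOne_um (a : F) :
    Matrix.trace ((negOne F * Um a : Matrix.SpecialLinearGroup (Fin 2) F) :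
      Matrix (Fin 2) (Fin 2) F) = -2 := by
  rw [trace_negOne_mul, trace_um]

theorem mk_um_ne_mk_um {a b : F} (ha : a ≠ 0) (h : ∀ s : F, b ≠ s^2 * a) :
    ConjClasses.mk (Um a) ≠ ConjClasses.mk (Um b : Matrix.SpecialLinearGroup (Fin 2) F) := by
  intro hEq
  obtain ⟨s, -, hs⟩ := (um_conj_iff ha).mp (ConjClasses.mk_eq_mk_iff_isConj.mp hEq)
  exact h s hs

end Count

theorem stmt_19 {F : Type*} [Field F] [Fintype F] (hq : Odd (Fintype.card F)) :
    (Fintype.card F % 4 = 1 →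
      Nat.card {c : ConjClasses (Matrix.SpecialLinearGroup (Fin 2) F) |
          ∃ g, ConjClasses.mk g = c ∧ IsConj g g⁻¹} = Fintype.card F + 4) ∧
    (Fintype.card F % 4 = 3 →
      Nat.card {c : ConjClasses (Matrix.SpecialLinearGroup (Fin 2) F) |
          ∃ g, ConjClasses.mk g = c ∧ IsConj g g⁻¹} = Fintype.card F) ∧
    {c : ConjClasses (Matrix.SpecialLinearGroup (Fin 2) F) |
        ∃ g, ConjClasses.mk g = c ∧ ∃ h, h ^ 2 = 1 ∧ h * g * h⁻¹ = g⁻¹} =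
      {ConjClasses.mk 1, ConjClasses.mk (negOne F)} := by
  have hq2 : Fintype.card F % 2 = 1 := Nat.odd_iff.mp hq
  have hcard2 : 2 ≤ Fintype.card F := Fintype.one_lt_card
  have h22 := two_ne_negTwo (F := F) hq2
  refine ⟨?_, ?_, ?_⟩
  · -- q ≡ 1 (mod 4)
    intro hq4
    obtain ⟨ε, hε⟩ := FiniteField.exists_nonsquare (F := F)
      (by intro h; have := FiniteField.even_card_of_char_two h; omega)
    rw [Nat.card_coe_set_eq, S_eq_one hq2 hq4 hε]
    have hε0 : ε ≠ 0 := by rintro rfl; exact hε ⟨0, by ring⟩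
    have hεns : ∀ s : F, ε ≠ s^2 * 1 := by
      intro s h; exact hε ⟨s, by rw [h]; ring⟩
    have h1ns : ∀ s : F, (1:F) ≠ s^2 * ε := by
      intro s h
      have hs0 : s ≠ 0 := by rintro rfl; rw [zero_pow, zero_mul] at h; exact one_ne_zero h; omega
      apply hε
      refine ⟨s⁻¹, ?_⟩
      field_simp
      linear_combination -h
    -- trace facts
    have t1 : Matrix.trace ((1 : Matrix.SpecialLinearGroup (Fin 2) F) :
        Matrix (Fin 2) (Fin 2) F) = 2 := trace_one'
    have tN := trace_negOne (F := F)
    have n6 : ConjClasses.mk (negOne F * Um ε) ∉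
        (fun t : F => ConjClasses.mk (Cm t)) '' {t : F | t ≠ 2 ∧ t ≠ -2} :=
      mk_not_mem_image (Or.inr (trace_negOne_um ε)) hq2
    have n5 : ConjClasses.mk (negOne F * Um 1) ∉
        insert (ConjClasses.mk (negOne F * Um ε))
          ((fun t : F => ConjClasses.mk (Cm t)) '' {t : F | t ≠ 2 ∧ t ≠ -2}) := by
      intro h
      rcases Set.mem_insert_iff.mp h with h | h
      · have := ConjClasses.mk_eq_mk_iff_isConj.mp h
        rw [isConj_negOne_mul_iff] at this
        obtain ⟨s, -, hs⟩ := (um_conj_iff one_ne_zero).mp this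
        exact hεns s hs
      · exact mk_not_mem_image (Or.inr (trace_negOne_um 1)) hq2 h
    have n4 : ConjClasses.mk (Um ε) ∉
        insert (ConjClasses.mk (negOne F * Um 1)) (insert (ConjClasses.mk (negOne F * Um ε))
          ((fun t : F => ConjClasses.mk (Cm t)) '' {t : F | t ≠ 2 ∧ t ≠ -2})) := by
      intro h
      rcases Set.mem_insert_iff.mp h with h | h
      · exact mk_ne_of_trace (by rw [trace_um, trace_negOne_um]; exact h22) h
      rcases Set.mem_insert_iff.mp h with h | h
      · exact mk_ne_of_trace (by rw [trace_um, trace_negOne_um]; exact h22) h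
      · exact mk_not_mem_image (Or.inl (trace_um ε)) hq2 h
    have n3 : ConjClasses.mk (Um 1) ∉
        insert (ConjClasses.mk (Um ε)) (insert (ConjClasses.mk (negOne F * Um 1))
          (insert (ConjClasses.mk (negOne F * Um ε))
          ((fun t : F => ConjClasses.mk (Cm t)) '' {t : F | t ≠ 2 ∧ t ≠ -2}))) := by
      intro h
      rcases Set.mem_insert_iff.mp h with h | h
      · exact mk_um_ne_mk_um one_ne_zero hεns h
      rcases Set.mem_insert_iff.mp h with h | h
      · exact mk_ne_of_trace (by rw [trace_um, trace_negOne_um]; exact h22) h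
      rcases Set.mem_insert_iff.mp h with h | h
      · exact mk_ne_of_trace (by rw [trace_um, trace_negOne_um]; exact h22) h
      · exact mk_not_mem_image (Or.inl (trace_um 1)) hq2 h
    have n2 : ConjClasses.mk (negOne F) ∉
        insert (ConjClasses.mk (Um 1)) (insert (ConjClasses.mk (Um ε))
          (insert (ConjClasses.mk (negOne F * Um 1)) (insert (ConjClasses.mk (negOne F * Um ε))
          ((fun t : F => ConjClasses.mk (Cm t)) '' {t : F | t ≠ 2 ∧ t ≠ -2})))) := by
      have hNU : ∀ a : F, a ≠ 0 → ConjClasses.mk (negOne F) ≠ ConjClasses.mk (negOne F * Um a) := by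
        intro a ha0 h
        have h' := isConj_negOne (ConjClasses.mk_eq_mk_iff_isConj.mp h)
        have : Um a = 1 := by
          have := congrArg (fun x => negOne F * x) h'
          simpa [negOne_negOne_cancel, negOne_mul_negOne, mul_one] using this
        exact um_ne_one ha0 this
      intro h
      rcases Set.mem_insert_iff.mp h with h | h
      · exact mk_ne_of_trace (by rw [tN, trace_um]; exact fun hh => h22 hh.symm) h
      rcases Set.mem_insert_iff.mp h with h | h
      · exact mk_ne_of_trace (by rw [tN, trace_um]; exact fun hh => h22 hh.symm) h
      rcases Set.mem_insert_iff.mp h with h | h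
      · exact hNU 1 one_ne_zero h
      rcases Set.mem_insert_iff.mp h with h | h
      · exact hNU ε hε0 h
      · exact mk_not_mem_image (Or.inr tN) hq2 h
    have n1 : ConjClasses.mk (1 : Matrix.SpecialLinearGroup (Fin 2) F) ∉
        insert (ConjClasses.mk (negOne F)) (insert (ConjClasses.mk (Um 1))
          (insert (ConjClasses.mk (Um ε))
          (insert (ConjClasses.mk (negOne F * Um 1)) (insert (ConjClasses.mk (negOne F * Um ε))
          ((fun t : F => ConjClasses.mk (Cm t)) '' {t : F | t ≠ 2 ∧ t ≠ -2}))))) := by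
      have h1U : ∀ a : F, a ≠ 0 →
          ConjClasses.mk (1 : Matrix.SpecialLinearGroup (Fin 2) F) ≠ ConjClasses.mk (Um a) := by
        intro a ha0 h
        exact um_ne_one ha0 (isConj_one_right.mp (ConjClasses.mk_eq_mk_iff_isConj.mp h))
      intro h
      rcases Set.mem_insert_iff.mp h with h | h
      · exact mk_ne_of_trace (by rw [t1, tN]; exact h22) h
      rcases Set.mem_insert_iff.mp h with h | h
      · exact h1U 1 one_ne_zero h
      rcases Set.mem_insert_iff.mp h with h | h
      · exact h1U ε hε0 h
      rcases Set.mem_insert_iff.mp h with h | h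
      · exact mk_ne_of_trace (by rw [t1, trace_negOne_um]; exact h22) h
      rcases Set.mem_insert_iff.mp h with h | h
      · exact mk_ne_of_trace (by rw [t1, trace_negOne_um]; exact h22) h
      · exact mk_not_mem_image (Or.inl t1) hq2 h
    rw [Set.ncard_insert_of_notMem n1, Set.ncard_insert_of_notMem n2,
      Set.ncard_insert_of_notMem n3, Set.ncard_insert_of_notMem n4,
      Set.ncard_insert_of_notMem n5, Set.ncard_insert_of_notMem n6,
      Set.ncard_image_of_injOn cm_injOn, T_ncard hq2]
    omega
  · -- q ≡ 3 (mod 4)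
    intro hq4
    rw [Nat.card_coe_set_eq, S_eq_three hq2 hq4]
    have n2 : ConjClasses.mk (negOne F) ∉
        (fun t : F => ConjClasses.mk (Cm t)) '' {t : F | t ≠ 2 ∧ t ≠ -2} :=
      mk_not_mem_image (Or.inr (trace_negOne (F := F))) hq2
    have n1 : ConjClasses.mk (1 : Matrix.SpecialLinearGroup (Fin 2) F) ∉
        insert (ConjClasses.mk (negOne F))
          ((fun t : F => ConjClasses.mk (Cm t)) '' {t : F | t ≠ 2 ∧ t ≠ -2}) := by
      intro h
      rcases Set.mem_insert_iff.mp h with h | h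
      · exact mk_ne_of_trace (by rw [trace_one', trace_negOne]; exact h22) h
      · exact mk_not_mem_image (Or.inl trace_one') hq2 h
    rw [Set.ncard_insert_of_notMem n1, Set.ncard_insert_of_notMem n2,
      Set.ncard_image_of_injOn cm_injOn, T_ncard hq2]
    omega
  · -- strongly real classes
    ext c
    simp only [Set.mem_setOf_eq, Set.mem_insert_iff, Set.mem_singleton_iff]
    constructor
    · rintro ⟨g, rfl, h, hh2, hrev⟩
      have hhc : h = 1 ∨ h = negOne F := sq_one_classify hq2 h (by rw [← pow_two]; exact hh2)
      have hfix : h * g * h⁻¹ = g := by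
        rcases hhc with rfl | rfl
        · rw [one_mul, inv_one, mul_one]
        · rw [negOne_mul_comm, mul_assoc, mul_inv_cancel, mul_one]
      have hgg : g = g⁻¹ := hfix.symm.trans hrev
      have hsq1 : g * g = 1 := by nth_rewrite 2 [hgg]; exact mul_inv_cancel g
      rcases sq_one_classify hq2 g hsq1 with rfl | rfl
      · exact Or.inl rfl
      · exact Or.inr rfl
    · rintro (rfl | rfl)
      · exact ⟨1, rfl, 1, one_pow 2, by simp⟩
      · exact ⟨negOne F, rfl, 1, one_pow 2, by simp [negOne_inv]⟩
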